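/- Let Z = {z_1, …, z_n} ⊂ ℝ^d be an almost regular simplex, i.e., a set realizing an almost regular matrix: the distances α_{ij} = ‖z_i − z_j‖ are positive for i ≠ j and satisfy ∑_{1 ≤ i < j ≤ n} (α_max² − α_{ij}²) < α_max², where α_max = max_{i,j} α_{ij}. Then for every integer m ≥ 2 there exists an m-regular polygonal torus T (a finite product of regular m-gons, possibly of different circumradii) such that Z embeds isometrically into T. -/

import Mathlib

open scoped Classical

noncomputable section

/-- The `j`-th vertex of a regular `m`-gon in the Euclidean plane with center `c`,
circumradius `r` and angle `θ`. -/
def polygonVertex (c : EuclideanSpace ℝ (Fin 2)) (r θ : ℝ) (m j : ℕ) :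
    EuclideanSpace ℝ (Fin 2) :=
  (WithLp.equiv 2 (Fin 2 → ℝ)).symm
    ![c 0 + r * Real.cos (2 * Real.pi * j / m + θ),
      c 1 + r * Real.sin (2 * Real.pi * j / m + θ)]

/-- `T` is (the vertex set of) a regular `m`-gon of circumradius `r` in the plane. -/
def IsRegularPolygon (m : ℕ) (r : ℝ) (T : Set (EuclideanSpace ℝ (Fin 2))) : Prop :=
  2 ≤ m ∧ 0 < r ∧
    ∃ (c : EuclideanSpace ℝ (Fin 2)) (θ : ℝ),
      T = {p | ∃ j < m, p = polygonVertex c r θ m j}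

/-- The Cartesian product of `n` planar sets, viewed inside `ℝ^{2n}`. -/
def toriProduct {n : ℕ} (T : Fin n → Set (EuclideanSpace ℝ (Fin 2))) :
    Set (EuclideanSpace ℝ (Fin n × Fin 2)) :=
  {x | ∀ i : Fin n, ((WithLp.equiv 2 (Fin 2 → ℝ)).symm fun j => x (i, j)) ∈ T i}

/-! ### Auxiliary machinery -/

def pvAux (r : ℝ) (m j : ℕ) : Fin 2 → ℝ :=
  ![r * Real.cos (2 * Real.pi * j / m), r * Real.sin (2 * Real.pi * j / m)]

lemma pvAux_eq_polygonVertex (r : ℝ) (m j : ℕ) :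
    (WithLp.equiv 2 (Fin 2 → ℝ)).symm (pvAux r m j) = polygonVertex 0 r 0 m j := by
  unfold pvAux polygonVertex
  congr 1
  funext c
  have h0 : (0 : EuclideanSpace ℝ (Fin 2)) 0 = 0 := rfl
  have h1 : (0 : EuclideanSpace ℝ (Fin 2)) 1 = 0 := rfl
  fin_cases c <;> simp [h0, h1]

lemma cos_lt_one_aux {m : ℕ} (hm : 2 ≤ m) : 0 < 1 - Real.cos (2 * Real.pi / m) := by
  have hm0 : (0:ℝ) < m := by positivity
  have hm2 : (2:ℝ) ≤ m := by exact_mod_cast hm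
  have h1 : 0 < 2 * Real.pi / m := by positivity
  have h2 : 2 * Real.pi / m ≤ Real.pi := by
    rw [div_le_iff₀ hm0]
    nlinarith [Real.pi_pos]
  have h := Real.cos_lt_cos_of_nonneg_of_le_pi le_rfl h2 h1
  rw [Real.cos_zero] at h
  linarith

def chordR (m : ℕ) (s : ℝ) : ℝ := Real.sqrt (s / (2 * (1 - Real.cos (2 * Real.pi / m))))

lemma chordR_pos {m : ℕ} (hm : 2 ≤ m) {s : ℝ} (hs : 0 < s) : 0 < chordR m s :=
  Real.sqrt_pos.2 (div_pos hs (by linarith [cos_lt_one_aux hm]))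

lemma chord_sq {m : ℕ} (hm : 2 ≤ m) {s : ℝ} (hs : 0 < s) :
    (pvAux (chordR m s) m 1 0 - pvAux (chordR m s) m 0 0) ^ 2
      + (pvAux (chordR m s) m 1 1 - pvAux (chordR m s) m 0 1) ^ 2 = s := by
  have hc := cos_lt_one_aux hm
  have hr2 : chordR m s ^ 2 = s / (2 * (1 - Real.cos (2 * Real.pi / m))) := by
    rw [chordR, Real.sq_sqrt]
    exact le_of_lt (div_pos hs (by linarith))
  have hpy := Real.sin_sq_add_cos_sq (2 * Real.pi / m)
  simp only [pvAux, Matrix.cons_val_zero, Matrix.cons_val_one, Matrix.head_cons,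
    Nat.cast_one, Nat.cast_zero, mul_one]
  have h0 : 2 * Real.pi * 0 / m = 0 := by ring
  rw [h0, Real.cos_zero, Real.sin_zero]
  have key : (chordR m s * Real.cos (2 * Real.pi / m) - chordR m s * 1) ^ 2
      + (chordR m s * Real.sin (2 * Real.pi / m) - chordR m s * 0) ^ 2
      = chordR m s ^ 2 * (2 * (1 - Real.cos (2 * Real.pi / m))) := by nlinarith [hpy]
  rw [key, hr2, div_mul_cancel₀ _ (by linarith : (2 * (1 - Real.cos (2 * Real.pi / m)):ℝ) ≠ 0)]

/-- Every almost regular simplex embeds, for every `m ≥ 2`, into an `m`-regular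
polygonal torus (a finite product of regular `m`-gons, possibly of different radii). -/
theorem almost_regular_simplex_embeds_into_m_regular_torus
    (n d : ℕ) (z : Fin n → EuclideanSpace ℝ (Fin d)) (αmax : ℝ)
    (hpos : ∀ i j, i ≠ j → 0 < dist (z i) (z j))
    (hub : ∀ i j, dist (z i) (z j) ≤ αmax)
    (hattained : ∃ i j, dist (z i) (z j) = αmax)
    (hsum : ∑ i : Fin n, ∑ j ∈ Finset.Ioi i,
        (αmax ^ 2 - dist (z i) (z j) ^ 2) < αmax ^ 2)
    (m : ℕ) (hm : 2 ≤ m) :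
    ∃ (N : ℕ) (T : Fin N → Set (EuclideanSpace ℝ (Fin 2))) (r : Fin N → ℝ),
      (∀ i, IsRegularPolygon m (r i) (T i)) ∧
      ∃ f : Fin n → EuclideanSpace ℝ (Fin N × Fin 2),
        (∀ i, f i ∈ toriProduct T) ∧
        ∀ i j, dist (f i) (f j) = dist (z i) (z j) := by
  classical
  -- trivial case n = 0
  rcases Nat.eq_zero_or_pos n with hn0 | hn0
  · subst hn0
    exact ⟨0, Fin.elim0, Fin.elim0, fun i => i.elim0, Fin.elim0,
      fun i => i.elim0, fun i => i.elim0⟩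
  have i₀ : Fin n := ⟨0, hn0⟩
  have hα0 : 0 ≤ αmax := le_trans dist_nonneg (hub i₀ i₀)
  set γ : Fin n → Fin n → ℝ := fun i j => αmax ^ 2 - dist (z i) (z j) ^ 2 with hγ
  have hγsymm : ∀ i j, γ i j = γ j i := fun i j => by simp [hγ, dist_comm]
  have hγ0 : ∀ i j, 0 ≤ γ i j := fun i j => by
    have h1 := hub i j
    have h2 : (0:ℝ) ≤ dist (z i) (z j) := dist_nonneg
    simp only [hγ]
    nlinarith
  set P : ℝ := ∑ i : Fin n, ∑ j ∈ Finset.Ioi i, γ i j with hP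
  have hD : 0 < αmax ^ 2 - P := by linarith [hsum]
  set ε : ℝ := (αmax ^ 2 - P) / (n + 1) with hε
  have hε0 : 0 < ε := by positivity
  -- the sum of γ i k over k ≠ i is at most P
  have hPI : ∀ i : Fin n, ∑ k ∈ Finset.univ.erase i, γ i k ≤ P := by
    intro i
    have hsplit : Finset.univ.erase i = Finset.Iio i ∪ Finset.Ioi i := by
      ext k
      simp only [Finset.mem_erase, Finset.mem_union, Finset.mem_Iio, Finset.mem_Ioi,
        Finset.mem_univ, and_true]
      exact ⟨fun h => h.lt_or_gt, fun h => h.elim ne_of_lt ne_of_gt⟩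
    have hdisj : Disjoint (Finset.Iio i) (Finset.Ioi i) := by
      rw [Finset.disjoint_left]
      intro a ha ha'
      simp only [Finset.mem_Iio] at ha
      simp only [Finset.mem_Ioi] at ha'
      exact absurd (ha.trans ha') (lt_irrefl _)
    rw [hsplit, Finset.sum_union hdisj]
    have hP1 : P = (∑ b ∈ Finset.Ioi i, γ i b)
        + ∑ a ∈ Finset.univ.erase i, ∑ b ∈ Finset.Ioi a, γ a b := by
      rw [hP, ← Finset.add_sum_erase _ _ (Finset.mem_univ i)]
    have hstep : ∑ a ∈ Finset.Iio i, γ i a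
        ≤ ∑ a ∈ Finset.univ.erase i, ∑ b ∈ Finset.Ioi a, γ a b := by
      have h1 : ∑ a ∈ Finset.Iio i, γ i a ≤ ∑ a ∈ Finset.Iio i, ∑ b ∈ Finset.Ioi a, γ a b := by
        apply Finset.sum_le_sum
        intro a ha
        rw [hγsymm i a]
        exact Finset.single_le_sum (fun b _ => hγ0 a b) (Finset.mem_Ioi.2 (Finset.mem_Iio.1 ha))
      refine h1.trans (Finset.sum_le_sum_of_subset_of_nonneg ?_ ?_)
      · intro a ha
        simp only [Finset.mem_Iio] at ha
        exact Finset.mem_erase.2 ⟨ne_of_lt ha, Finset.mem_univ a⟩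
      · intro a _ _
        exact Finset.sum_nonneg fun b _ => hγ0 a b
    linarith
  -- per-point weights
  set u : Fin n → ℝ := fun i => (αmax ^ 2 + ε) / 2 - ∑ k ∈ Finset.univ.erase i, (γ i k + ε) / 2
    with hu_def
  have hu : ∀ i, 0 < u i := by
    intro i
    have hcard : (Finset.univ.erase i).card = n - 1 := by
      rw [Finset.card_erase_of_mem (Finset.mem_univ i), Finset.card_univ, Fintype.card_fin]
    have hsum1 : ∑ k ∈ Finset.univ.erase i, (γ i k + ε) / 2
        = (∑ k ∈ Finset.univ.erase i, γ i k) / 2 + ((n:ℝ) - 1) * ε / 2 := by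
      have hpt : ∀ k, (γ i k + ε) / 2 = γ i k / 2 + ε / 2 := fun k => by ring
      simp_rw [hpt]
      rw [Finset.sum_add_distrib, Finset.sum_const, hcard, nsmul_eq_mul, ← Finset.sum_div]
      have hcast : ((n - 1 : ℕ) : ℝ) = (n : ℝ) - 1 := by
        have h1n : 1 ≤ n := hn0
        push_cast [h1n]
        ring
      rw [hcast]
      ring
    have h1 := hPI i
    have hεeq : ε * (n + 1) = αmax ^ 2 - P := by
      rw [hε]
      field_simp
    show 0 < (αmax ^ 2 + ε) / 2 - ∑ k ∈ Finset.univ.erase i, (γ i k + ε) / 2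
    rw [hsum1]
    nlinarith [hε0]
  -- chord-length-squared targets for each polygon
  set s : Fin n × Fin n → ℝ := fun p => if p.1 = p.2 then u p.1 else (γ p.1 p.2 + ε) / 4
    with hs_def
  have hs : ∀ p, 0 < s p := by
    intro p
    simp only [hs_def]
    split
    · exact hu _
    · exact div_pos (add_pos_of_nonneg_of_pos (hγ0 p.1 p.2) hε0) (by norm_num)
  set V : Fin n × Fin n → Fin n → ℕ := fun p i => if i = p.1 ∨ i = p.2 then 1 else 0
    with hV_def
  have hVlt : ∀ p i, V p i < m := by
    intro p i
    simp only [hV_def]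
    split <;> omega
  set e : Fin (n * n) → Fin n × Fin n := fun q => finProdFinEquiv.symm q with he_def
  set R : Fin (n * n) → ℝ := fun q => chordR m (s (e q)) with hR_def
  have hRval : ∀ q, R q = chordR m (s (e q)) := fun q => by rw [hR_def]
  refine ⟨n * n, fun q => {p | ∃ j < m, p = polygonVertex 0 (R q) 0 m j}, R,
    fun q => ⟨hm, by rw [hRval]; exact chordR_pos hm (hs _), 0, 0, rfl⟩, ?_⟩
  set f : Fin n → EuclideanSpace ℝ (Fin (n * n) × Fin 2) :=
    fun i => (WithLp.equiv 2 ((Fin (n * n) × Fin 2) → ℝ)).symm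
      fun q => pvAux (R q.1) m (V (e q.1) i) q.2 with hf_def
  have hfa : ∀ (k : Fin n) (q : Fin (n * n)) (c : Fin 2),
      f k (q, c) = pvAux (R q) m (V (e q) k) c := by
    intro k q c
    simp only [hf_def]
    rfl
  refine ⟨f, ?_, ?_⟩
  · intro i
    intro q
    have happ : (fun c => f i (q, c)) = pvAux (R q) m (V (e q) i) := by
      funext c
      rw [hfa]
    show ((WithLp.equiv 2 (Fin 2 → ℝ)).symm fun c => f i (q, c)) ∈ _
    rw [happ, pvAux_eq_polygonVertex]
    exact ⟨V (e q) i, hVlt _ _, rfl⟩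
  · intro i j
    rcases eq_or_ne i j with rfl | hij
    · simp
    have hSQ : ∀ p : Fin n × Fin n,
        (pvAux (chordR m (s p)) m (V p i) 0 - pvAux (chordR m (s p)) m (V p j) 0) ^ 2
          + (pvAux (chordR m (s p)) m (V p i) 1 - pvAux (chordR m (s p)) m (V p j) 1) ^ 2
          = if V p i = V p j then 0 else s p := by
      intro p
      by_cases h1 : i = p.1 ∨ i = p.2 <;> by_cases h2 : j = p.1 ∨ j = p.2 <;>
        simp only [hV_def, h1, h2, if_true, if_false, eq_self_iff_true]
      · simp
      · rw [if_neg (by norm_num)]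
        exact chord_sq hm (hs p)
      · rw [if_neg (by norm_num)]
        have h := chord_sq hm (hs p)
        linear_combination h
      · simp
    have hdist2 : dist (f i) (f j)
        = Real.sqrt (∑ p : Fin n × Fin n, if V p i = V p j then 0 else s p) := by
      rw [EuclideanSpace.dist_eq]
      congr 1
      calc ∑ q : Fin (n * n) × Fin 2, dist (f i q) (f j q) ^ 2
          = ∑ q : Fin (n * n), (if V (e q) i = V (e q) j then 0 else s (e q)) := by
            rw [Fintype.sum_prod_type]
            refine Finset.sum_congr rfl fun q _ => ?_
            have hc : ∀ c : Fin 2, dist (f i (q, c)) (f j (q, c)) ^ 2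
                = (pvAux (chordR m (s (e q))) m (V (e q) i) c
                    - pvAux (chordR m (s (e q))) m (V (e q) j) c) ^ 2 := by
              intro c
              rw [Real.dist_eq, hfa, hfa, hRval, sq_abs]
            rw [Fin.sum_univ_two, hc 0, hc 1]
            exact hSQ (e q)
        _ = ∑ p : Fin n × Fin n, (if V p i = V p j then 0 else s p) :=
            Fintype.sum_equiv finProdFinEquiv.symm _ _ (fun q => by rw [he_def])
    have hji : j ≠ i := hij.symm
    have hjmem : j ∈ Finset.univ.erase i := Finset.mem_erase.2 ⟨hji, Finset.mem_univ j⟩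
    have himem : i ∈ Finset.univ.erase j := Finset.mem_erase.2 ⟨hij, Finset.mem_univ i⟩
    have hmain : (∑ p : Fin n × Fin n, if V p i = V p j then 0 else s p)
        = dist (z i) (z j) ^ 2 := by
      rw [Fintype.sum_prod_type]
      rw [← Finset.add_sum_erase _ _ (Finset.mem_univ i)]
      rw [← Finset.add_sum_erase _ _ hjmem]
      -- row a = i
      have hgi : (∑ b : Fin n, if V (i, b) i = V (i, b) j then 0 else s (i, b))
          = u i + ∑ b ∈ (Finset.univ.erase i).erase j, (γ i b + ε) / 4 := by
        have h1 : ∀ b : Fin n, (if V (i, b) i = V (i, b) j then 0 else s (i, b))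
            = if j = b then 0 else s (i, b) := by
          intro b
          have hVi : V (i, b) i = 1 := by simp [hV_def]
          have hVj : V (i, b) j = if j = b then 1 else 0 := by
            simp only [hV_def]
            by_cases hb : j = b
            · simp [hb]
            · simp [hb, hji]
          rw [hVi, hVj]
          by_cases hb : j = b
          · simp [hb]
          · simp [hb]
        simp_rw [h1]
        rw [← Finset.add_sum_erase _ _ (Finset.mem_univ j), if_pos rfl, zero_add]
        rw [Finset.sum_congr rfl
          (fun b hb => if_neg (fun h => (Finset.mem_erase.1 hb).1 h.symm))]
        rw [← Finset.add_sum_erase _ _ himem]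
        rw [Finset.erase_right_comm]
        congr 1
        · simp [hs_def]
        · refine Finset.sum_congr rfl fun b hb => ?_
          have hbi : b ≠ i := (Finset.mem_erase.1 (Finset.mem_erase.1 hb).2).1
          have hib : ¬ i = b := fun h => hbi h.symm
          simp [hs_def, hib]
      -- row a = j
      have hgj : (∑ b : Fin n, if V (j, b) i = V (j, b) j then 0 else s (j, b))
          = u j + ∑ b ∈ (Finset.univ.erase i).erase j, (γ j b + ε) / 4 := by
        have h1 : ∀ b : Fin n, (if V (j, b) i = V (j, b) j then 0 else s (j, b))
            = if i = b then 0 else s (j, b) := by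
          intro b
          have hVj : V (j, b) j = 1 := by simp [hV_def]
          have hVi : V (j, b) i = if i = b then 1 else 0 := by
            simp only [hV_def]
            by_cases hb : i = b
            · simp [hb]
            · simp [hb, hij]
          rw [hVj, hVi]
          by_cases hb : i = b
          · simp [hb]
          · simp [hb]
        simp_rw [h1]
        rw [← Finset.add_sum_erase _ _ (Finset.mem_univ i), if_pos rfl, zero_add]
        rw [Finset.sum_congr rfl
          (fun b hb => if_neg (fun h => (Finset.mem_erase.1 hb).1 h.symm))]
        rw [← Finset.add_sum_erase _ _ hjmem]
        congr 1
        · simp [hs_def]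
        · refine Finset.sum_congr rfl fun b hb => ?_
          have hbj : b ≠ j := (Finset.mem_erase.1 hb).1
          have hjb : ¬ j = b := fun h => hbj h.symm
          simp [hs_def, hjb]
      -- rows a ∉ {i, j}
      have hga : ∀ a ∈ (Finset.univ.erase i).erase j,
          (∑ b : Fin n, if V (a, b) i = V (a, b) j then 0 else s (a, b))
          = (γ a i + ε) / 4 + (γ a j + ε) / 4 := by
        intro a ha
        have haj : a ≠ j := (Finset.mem_erase.1 ha).1
        have hai : a ≠ i := (Finset.mem_erase.1 (Finset.mem_erase.1 ha).2).1
        have h1 : ∀ b : Fin n, (if V (a, b) i = V (a, b) j then 0 else s (a, b))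
            = if i = b then s (a, b) else if j = b then s (a, b) else 0 := by
          intro b
          have hVi : V (a, b) i = if i = b then 1 else 0 := by
            simp only [hV_def]
            by_cases hb : i = b
            · simp [hb]
            · have hia : ¬ i = a := fun h => hai h.symm
              simp [hb, hia]
          have hVj : V (a, b) j = if j = b then 1 else 0 := by
            simp only [hV_def]
            by_cases hb : j = b
            · simp [hb]
            · have hja : ¬ j = a := fun h => haj h.symm
              simp [hb, hja]
          rw [hVi, hVj]
          by_cases hbi : i = b
          · have hbj : ¬ j = b := fun h => hij (hbi.trans h.symm)
            simp [hbi, hbj]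
          · by_cases hbj : j = b
            · simp [hbi, hbj]
            · simp [hbi, hbj]
        simp_rw [h1]
        rw [← Finset.add_sum_erase _ _ (Finset.mem_univ i), if_pos rfl]
        rw [← Finset.add_sum_erase _ _ hjmem]
        rw [if_neg hij, if_pos rfl]
        rw [Finset.sum_eq_zero (fun b hb => by
          have hbj : b ≠ j := (Finset.mem_erase.1 hb).1
          have hbi : b ≠ i := (Finset.mem_erase.1 (Finset.mem_erase.1 hb).2).1
          rw [if_neg (fun h => hbi h.symm), if_neg (fun h => hbj h.symm)])]
        simp only [hs_def, add_zero]
        rw [if_neg (show ¬ (a, i).1 = (a, i).2 from hai),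
          if_neg (show ¬ (a, j).1 = (a, j).2 from haj)]
      have h3 : (∑ a ∈ (Finset.univ.erase i).erase j,
            ∑ b : Fin n, if V (a, b) i = V (a, b) j then 0 else s (a, b))
          = ∑ a ∈ (Finset.univ.erase i).erase j, ((γ a i + ε) / 4 + (γ a j + ε) / 4) :=
        Finset.sum_congr rfl hga
      rw [hgi, hgj, h3]
      have hsplit3 : (∑ a ∈ (Finset.univ.erase i).erase j,
            ((γ a i + ε) / 4 + (γ a j + ε) / 4))
          = (∑ b ∈ (Finset.univ.erase i).erase j, (γ i b + ε) / 4)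
            + ∑ b ∈ (Finset.univ.erase i).erase j, (γ j b + ε) / 4 := by
        rw [Finset.sum_add_distrib]
        congr 1 <;> exact Finset.sum_congr rfl fun a _ => by rw [hγsymm]
      rw [hsplit3]
      have hui : u i = (αmax ^ 2 + ε) / 2 - ∑ k ∈ Finset.univ.erase i, (γ i k + ε) / 2 := by
        rw [hu_def]
      have huj : u j = (αmax ^ 2 + ε) / 2 - ∑ k ∈ Finset.univ.erase j, (γ j k + ε) / 2 := by
        rw [hu_def]
      have hAi : (∑ k ∈ Finset.univ.erase i, (γ i k + ε) / 2)
          = (γ i j + ε) / 2 + 2 * ∑ b ∈ (Finset.univ.erase i).erase j, (γ i b + ε) / 4 := by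
        rw [← Finset.add_sum_erase _ _ hjmem]
        congr 1
        rw [Finset.mul_sum]
        exact Finset.sum_congr rfl fun b _ => by ring
      have hAj : (∑ k ∈ Finset.univ.erase j, (γ j k + ε) / 2)
          = (γ j i + ε) / 2 + 2 * ∑ b ∈ (Finset.univ.erase i).erase j, (γ j b + ε) / 4 := by
        rw [← Finset.add_sum_erase _ _ himem, Finset.erase_right_comm]
        congr 1
        rw [Finset.mul_sum]
        exact Finset.sum_congr rfl fun b _ => by ring
      rw [hui, huj, hAi, hAj, hγsymm j i]
      have hgij : γ i j = αmax ^ 2 - dist (z i) (z j) ^ 2 := by simp only [hγ]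
      rw [hgij]
      ring
    rw [hdist2, hmain, Real.sqrt_sq dist_nonneg]
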